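/- Let Q be a uniformly hyperbolic set of a control system. Then Q is expansive in the following uniform sense: there exists δ > 0 such that for all (u,x) ∈ L(Q) and y ∈ M, if d(φ(t,x,u), φ(t,y,u)) ≤ δ for all t ∈ ℤ, then x = y. In particular, each fiber Q(u) contains no two distinct points whose φ(·,·,u)-orbits stay within distance δ of each other for all time. -/

import Mathlib

open Set Metric

private lemma stmt18_arith {η γ α β : ℝ} (hη0 : 0 ≤ η) (hη : η ≤ 1/8)
    (hγ0 : 0 ≤ γ) (hγ : γ ≤ 1/8) (hα0 : 0 ≤ α) (hβ0 : 0 ≤ β)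
    (h1 : α ≤ η * α + γ * (α + β))
    (h2 : β ≤ η * (β + γ * (α + β))) : α = 0 ∧ β = 0 := by
  have hab0 : 0 ≤ α + β := by linarith
  have e2 : γ * (α + β) ≤ (1/8) * (α + β) := mul_le_mul_of_nonneg_right hγ hab0
  have e1 : η * α ≤ (1/8) * α := mul_le_mul_of_nonneg_right hη hα0
  have h2' : β ≤ η * (β + (1/8) * (α + β)) :=
    h2.trans (mul_le_mul_of_nonneg_left (by linarith) hη0)
  have h2'' : β ≤ (1/8) * (β + (1/8) * (α + β)) :=
    h2'.trans (mul_le_mul_of_nonneg_right hη (by linarith))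
  have hb : β ≤ α := by linarith
  have ha : α ≤ 0 := by linarith
  have ha0 : α = 0 := le_antisymm ha hα0
  refine ⟨ha0, le_antisymm (by linarith) hβ0⟩

/-- A uniformly hyperbolic set `Q` of a control system is uniformly expansive:
there is `δ > 0` such that whenever `(u,x) ∈ L(Q)` and `y ∈ M` satisfy
`d(φ(t,x,u), φ(t,y,u)) ≤ δ` for all `t ∈ ℤ`, then `x = y`. -/
theorem stmt_18 {V U : Type*} [NormedAddCommGroup V] [InnerProductSpace ℝ V]
    [FiniteDimensional ℝ V] [MetricSpace U] [CompactSpace U]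
    (φ : ℤ → V → (ℤ → U) → V)
    (h0 : ∀ (x : V) (u : ℤ → U), φ 0 x u = x)
    (hcoc : ∀ (t s : ℤ) (x : V) (u : ℤ → U),
      φ (t + s) x u = φ s (φ t x u) (fun n : ℤ => u (n + t)))
    (hcont : ∀ t : ℤ, Continuous (fun p : V × (ℤ → U) => φ t p.1 p.2))
    (hdiff : ∀ (t : ℤ) (u : ℤ → U), ContDiff ℝ 1 (fun x : V => φ t x u))
    (hcontD : ∀ t : ℤ, Continuous (fun p : (ℤ → U) × V =>
      fderiv ℝ (fun x : V => φ t x p.1) p.2))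
    (Q : Set V) (hQ : IsCompact Q) (hQne : Q.Nonempty)
    (hQinv : ∀ x ∈ Q, ∃ u : ℤ → U, ∀ t : ℤ, φ t x u ∈ Q)
    (Em Ep : (ℤ → U) × V → Submodule ℝ V)
    (hsplit : ∀ p : (ℤ → U) × V, (∀ t : ℤ, φ t p.2 p.1 ∈ Q) → IsCompl (Em p) (Ep p))
    (hinv : ∀ p : (ℤ → U) × V, (∀ t : ℤ, φ t p.2 p.1 ∈ Q) → ∀ t : ℤ,
      (Em p).map (fderiv ℝ (fun x : V => φ t x p.1) p.2).toLinearMap =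
          Em ((fun n : ℤ => p.1 (n + t)), φ t p.2 p.1) ∧
      (Ep p).map (fderiv ℝ (fun x : V => φ t x p.1) p.2).toLinearMap =
          Ep ((fun n : ℤ => p.1 (n + t)), φ t p.2 p.1))
    (c lam : ℝ) (hc : 1 ≤ c) (hlam0 : 0 < lam) (hlam1 : lam < 1)
    (hcontr : ∀ p : (ℤ → U) × V, (∀ t : ℤ, φ t p.2 p.1 ∈ Q) → ∀ t : ℕ,
      (∀ v ∈ Em p, ‖fderiv ℝ (fun x : V => φ (t : ℤ) x p.1) p.2 v‖ ≤ c * lam ^ t * ‖v‖) ∧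
      (∀ v ∈ Ep p, ‖fderiv ℝ (fun x : V => φ (-(t : ℤ)) x p.1) p.2 v‖ ≤ c * lam ^ t * ‖v‖))
    (dm dp : ℕ)
    (hdim : ∀ p : (ℤ → U) × V, (∀ t : ℤ, φ t p.2 p.1 ∈ Q) →
      Module.finrank ℝ (Em p) = dm ∧ Module.finrank ℝ (Ep p) = dp) :
    ∃ δ : ℝ, 0 < δ ∧ ∀ p : (ℤ → U) × V, (∀ t : ℤ, φ t p.2 p.1 ∈ Q) → ∀ y : V,
      (∀ t : ℤ, dist (φ t p.2 p.1) (φ t y p.1) ≤ δ) → p.2 = y := by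
  classical
  have hdf : ∀ (t : ℤ) (u : ℤ → U), Differentiable ℝ (fun x : V => φ t x u) :=
    fun t u => (hdiff t u).differentiable one_ne_zero
  set θ : ℤ → ((ℤ → U) × V) → ((ℤ → U) × V) :=
    fun t p => ((fun n => p.1 (n + t)), φ t p.2 p.1) with hθdef
  set D : ℤ → ((ℤ → U) × V) → (V →L[ℝ] V) :=
    fun t p => fderiv ℝ (fun x : V => φ t x p.1) p.2 with hDdef
  have hθO : ∀ (t : ℤ) (p : (ℤ → U) × V), (∀ s : ℤ, φ s p.2 p.1 ∈ Q) →
      ∀ s : ℤ, φ s (θ t p).2 (θ t p).1 ∈ Q := by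
    intro t p hp s
    show φ s (φ t p.2 p.1) (fun n => p.1 (n + t)) ∈ Q
    rw [← hcoc t s p.2 p.1]
    exact hp (t + s)
  have hθθ : ∀ (t s : ℤ) (p : (ℤ → U) × V), θ s (θ t p) = θ (t + s) p := by
    intro t s p
    refine Prod.ext (funext fun n => ?_) ?_
    · show p.1 (n + s + t) = p.1 (n + (t + s))
      exact congrArg p.1 (by ring)
    · show φ s (φ t p.2 p.1) (fun n => p.1 (n + t)) = φ (t + s) p.2 p.1
      exact (hcoc t s p.2 p.1).symm
  have hDcomp : ∀ (t s : ℤ) (p : (ℤ → U) × V),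
      D (t + s) p = (D s (θ t p)).comp (D t p) := by
    intro t s p
    have hfun : (fun x : V => φ (t + s) x p.1) =
        (fun y : V => φ s y (fun n => p.1 (n + t))) ∘ (fun x : V => φ t x p.1) :=
      funext fun x => hcoc t s x p.1
    show fderiv ℝ (fun x : V => φ (t + s) x p.1) p.2 = _
    rw [hfun, fderiv_comp p.2 (hdf s _ _) (hdf t _ _)]
  have hD0 : ∀ p : (ℤ → U) × V, D 0 p = ContinuousLinearMap.id ℝ V := by
    intro p
    have h : (fun x : V => φ 0 x p.1) = id := funext fun x => h0 x p.1
    show fderiv ℝ (fun x : V => φ 0 x p.1) p.2 = _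
    rw [h, fderiv_id]
  have hDinv : ∀ (t : ℤ) (p : (ℤ → U) × V) (v : V), D (-t) (θ t p) (D t p v) = v := by
    intro t p v
    have h := hDcomp t (-t) p
    rw [add_neg_cancel, hD0 p] at h
    have h2 := DFunLike.congr_fun h.symm v
    simpa using h2
  -- choose N
  have hc0 : (0:ℝ) < c := lt_of_lt_of_le one_pos hc
  obtain ⟨N, hNlt⟩ : ∃ n : ℕ, lam ^ n < 1 / (8 * c) :=
    exists_pow_lt_of_lt_one (by positivity) hlam1
  set η : ℝ := c * lam ^ N with hηdef
  have hη0 : 0 < η := mul_pos hc0 (pow_pos hlam0 N)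
  have hη8 : η ≤ 1 / 8 := by
    have h1 : c * lam ^ N ≤ c * (1 / (8 * c)) :=
      mul_le_mul_of_nonneg_left hNlt.le hc0.le
    have h2 : c * (1 / (8 * c)) = 1 / 8 := by field_simp
    rw [hηdef]; rw [h2] at h1; exact h1
  -- uniform bound on the derivative over the compact set
  have hSc : IsCompact ((univ : Set (ℤ → U)) ×ˢ Q) := isCompact_univ.prod hQ
  obtain ⟨K0, hK0⟩ := hSc.exists_bound_of_continuousOn ((hcontD (N:ℤ)).continuousOn)
  set K : ℝ := max K0 0 with hKdef
  have hKnn : (0:ℝ) ≤ K := le_max_right _ _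
  have hK : ∀ p : (ℤ → U) × V, p.2 ∈ Q → ‖D (N:ℤ) p‖ ≤ K := by
    intro p hp
    exact le_max_of_le_left (hK0 p ⟨mem_univ _, hp⟩)
  set M : ℝ := K + 2 with hMdef
  have hM0 : (0:ℝ) < M := by rw [hMdef]; linarith
  -- expansion estimate on Ep
  have hexp : ∀ p : (ℤ → U) × V, (∀ s : ℤ, φ s p.2 p.1 ∈ Q) →
      ∀ v ∈ Ep p, ‖v‖ ≤ η * ‖D (N:ℤ) p v‖ := by
    intro p hp v hv
    have h : (Ep p).map (D (N:ℤ) p).toLinearMap = Ep (θ (N:ℤ) p) := (hinv p hp N).2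
    have hw : D (N:ℤ) p v ∈ Ep (θ (N:ℤ) p) := by
      have hmem : D (N:ℤ) p v ∈ (Ep p).map (D (N:ℤ) p).toLinearMap :=
        Submodule.mem_map_of_mem hv
      rw [h] at hmem
      exact hmem
    have h2 : ‖D (-(N:ℤ)) (θ (N:ℤ) p) (D (N:ℤ) p v)‖ ≤ η * ‖D (N:ℤ) p v‖ :=
      (hcontr (θ (N:ℤ) p) (hθO (N:ℤ) p hp) N).2 _ hw
    rw [hDinv (N:ℤ) p v] at h2
    exact h2
  -- uniform bound on components of the splitting
  have hproj : ∀ p : (ℤ → U) × V, (∀ s : ℤ, φ s p.2 p.1 ∈ Q) →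
      ∀ vm ∈ Em p, ∀ vp ∈ Ep p,
      ‖vp‖ ≤ M * ‖vm + vp‖ ∧ ‖vm‖ ≤ M * ‖vm + vp‖ := by
    intro p hp vm hvm vp hvp
    have hpQ : p.2 ∈ Q := by have h := hp 0; rwa [h0] at h
    have h1 : ‖D (N:ℤ) p (vm + vp)‖ ≤ K * ‖vm + vp‖ :=
      le_trans ((D (N:ℤ) p).le_opNorm _)
        (mul_le_mul_of_nonneg_right (hK p hpQ) (norm_nonneg _))
    have h2 : ‖D (N:ℤ) p vm‖ ≤ η * ‖vm‖ := (hcontr p hp N).1 vm hvm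
    have h3 : ‖vp‖ ≤ η * ‖D (N:ℤ) p vp‖ := hexp p hp vp hvp
    have h4 : ‖D (N:ℤ) p vp‖ ≤ K * ‖vm + vp‖ + η * ‖vm‖ := by
      have he : D (N:ℤ) p vp = D (N:ℤ) p (vm + vp) - D (N:ℤ) p vm := by
        rw [map_add]; abel
      rw [he]
      exact le_trans (norm_sub_le _ _) (add_le_add h1 h2)
    have h5 := norm_sub_le (vm + vp) vp
    rw [add_sub_cancel_right] at h5
    have h6 : ‖vp‖ ≤ η * (K * ‖vm + vp‖ + η * ‖vm‖) :=
      h3.trans (mul_le_mul_of_nonneg_left h4 hη0.le)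
    have h6' : ‖vp‖ ≤ η * (K * ‖vm + vp‖) + η * (η * ‖vm‖) := by
      rw [mul_add] at h6; exact h6
    have e1 : η * (K * ‖vm + vp‖) ≤ (1/8) * (K * ‖vm + vp‖) :=
      mul_le_mul_of_nonneg_right hη8 (mul_nonneg hKnn (norm_nonneg _))
    have e2' : η * ‖vm‖ ≤ (1/8) * ‖vm‖ := mul_le_mul_of_nonneg_right hη8 (norm_nonneg _)
    have e2 : η * (η * ‖vm‖) ≤ (1/8) * ((1/8) * ‖vm‖) :=
      mul_le_mul hη8 e2' (mul_nonneg hη0.le (norm_nonneg _)) (by norm_num)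
    have hKv : 0 ≤ K * ‖vm + vp‖ := mul_nonneg hKnn (norm_nonneg _)
    have h7 : ‖vp‖ ≤ (K + 1) * ‖vm + vp‖ := by
      nlinarith [norm_nonneg vm, norm_nonneg vp, norm_nonneg (vm + vp)]
    constructor
    · refine h7.trans ?_
      have : K + 1 ≤ M := by rw [hMdef]; linarith
      exact mul_le_mul_of_nonneg_right this (norm_nonneg _)
    · rw [hMdef]
      have := norm_nonneg (vm + vp)
      linarith
  set ε0 : ℝ := 1 / (8 * M) with hε0def
  have hε0 : 0 < ε0 := by rw [hε0def]; positivity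
  have hMε : M * ε0 = 1 / 8 := by
    rw [hε0def]; field_simp
  -- tube lemma: uniform continuity of the derivative near Q
  have hWopen : IsOpen {q : ((ℤ → U) × V) × V |
      ‖D (N:ℤ) (q.1.1, q.1.2 + q.2) - D (N:ℤ) q.1‖ < ε0} := by
    apply isOpen_lt _ continuous_const
    apply Continuous.norm
    exact ((hcontD (N:ℤ)).comp
        ((continuous_fst.fst).prodMk (continuous_fst.snd.add continuous_snd))).sub
      ((hcontD (N:ℤ)).comp continuous_fst)
  have hsub : ((univ : Set (ℤ → U)) ×ˢ Q) ×ˢ ({0} : Set V) ⊆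
      {q : ((ℤ → U) × V) × V |
        ‖D (N:ℤ) (q.1.1, q.1.2 + q.2) - D (N:ℤ) q.1‖ < ε0} := by
    rintro ⟨q, w⟩ ⟨hq, hw⟩
    simp only [mem_singleton_iff] at hw
    subst hw
    show ‖D (N:ℤ) (q.1, q.2 + 0) - D (N:ℤ) q‖ < ε0
    rw [add_zero]
    simpa using hε0
  obtain ⟨Wu, Wv, hWuo, hWvo, hSWu, hWv0, hWsub⟩ :=
    generalized_tube_lemma hSc isCompact_singleton hWopen hsub
  have h0v : (0:V) ∈ Wv := hWv0 rfl
  obtain ⟨r, hr0, hball⟩ := Metric.isOpen_iff.mp hWvo 0 h0v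
  set δ := r / 2 with hδdef
  have hδpos : 0 < δ := by rw [hδdef]; positivity
  have hδ : ∀ pq : (ℤ → U) × V, pq.2 ∈ Q → ∀ w : V, ‖w‖ ≤ δ →
      ‖D (N:ℤ) (pq.1, pq.2 + w) - D (N:ℤ) pq‖ ≤ ε0 := by
    intro pq hq w hw
    have hwv : w ∈ Wv := by
      apply hball
      rw [Metric.mem_ball, dist_zero_right]
      rw [hδdef] at hw; linarith
    have hqu : pq ∈ Wu := hSWu ⟨mem_univ _, hq⟩
    have h := hWsub (show (pq, w) ∈ Wu ×ˢ Wv from ⟨hqu, hwv⟩)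
    exact le_of_lt h
  refine ⟨δ, hδpos, ?_⟩
  intro p hp y hy
  set z : ℤ → V := fun t => φ t y p.1 - φ t p.2 p.1 with hzdef
  have hznorm : ∀ t, ‖z t‖ ≤ δ := by
    intro t
    have h := hy t
    rw [dist_eq_norm] at h
    show ‖φ t y p.1 - φ t p.2 p.1‖ ≤ δ
    rwa [norm_sub_rev]
  -- Taylor estimate along the orbit
  have hT : ∀ t : ℤ, ‖z (t + (N:ℤ)) - D (N:ℤ) (θ t p) (z t)‖ ≤ ε0 * ‖z t‖ := by
    intro t
    set q := θ t p with hq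
    have hqQ : q.2 ∈ Q := by have h := hθO t p hp 0; rwa [h0] at h
    set B := D (N:ℤ) q with hB
    set g : V → V := fun ξ => φ (N:ℤ) ξ q.1 - B ξ with hg
    have hgdiff : ∀ ξ ∈ closedBall q.2 δ, DifferentiableAt ℝ g ξ :=
      fun ξ _ => ((hdf (N:ℤ) q.1) ξ).sub B.differentiableAt
    have hgd : ∀ ξ ∈ closedBall q.2 δ, ‖fderiv ℝ g ξ‖ ≤ ε0 := by
      intro ξ hξ
      have hder : fderiv ℝ g ξ = fderiv ℝ (fun ζ : V => φ (N:ℤ) ζ q.1) ξ - B := by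
        rw [hg]
        rw [fderiv_fun_sub ((hdf (N:ℤ) q.1) ξ) B.differentiableAt, B.fderiv]
      rw [hder]
      have hmem : ‖ξ - q.2‖ ≤ δ := by rwa [mem_closedBall, dist_eq_norm] at hξ
      have h := hδ q hqQ (ξ - q.2) hmem
      have heq : q.2 + (ξ - q.2) = ξ := by abel
      rw [heq] at h
      exact h
    have hmx : q.2 ∈ closedBall q.2 δ := mem_closedBall_self hδpos.le
    have hmy : φ t y p.1 ∈ closedBall q.2 δ := by
      rw [mem_closedBall, dist_eq_norm]
      exact hznorm t
    have key := Convex.norm_image_sub_le_of_norm_fderiv_le hgdiff hgd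
      (convex_closedBall _ _) hmx hmy
    have h1 : g (φ t y p.1) - g q.2 = z (t + (N:ℤ)) - B (z t) := by
      have e1 : φ (N:ℤ) (φ t y p.1) q.1 = φ (t + (N:ℤ)) y p.1 := (hcoc t N y p.1).symm
      have e2 : φ (N:ℤ) (φ t p.2 p.1) q.1 = φ (t + (N:ℤ)) p.2 p.1 := (hcoc t N p.2 p.1).symm
      show (φ (N:ℤ) (φ t y p.1) q.1 - B (φ t y p.1)) -
          (φ (N:ℤ) (φ t p.2 p.1) q.1 - B (φ t p.2 p.1)) =
          (φ (t + (N:ℤ)) y p.1 - φ (t + (N:ℤ)) p.2 p.1) - B (φ t y p.1 - φ t p.2 p.1)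
      rw [e1, e2, B.map_sub]
      abel
    have h2 : φ t y p.1 - q.2 = z t := rfl
    rw [h1, h2] at key
    exact key
  -- splitting of vectors at each time
  have hsum' : ∀ t : ℤ, ∀ w : V, ∃ vm ∈ Em (θ t p), ∃ vp ∈ Ep (θ t p), vm + vp = w := by
    intro t w
    have hc' := (hsplit (θ t p) (hθO t p hp)).codisjoint
    have hmem : w ∈ Em (θ t p) ⊔ Ep (θ t p) := by
      rw [codisjoint_iff.mp hc']; exact Submodule.mem_top
    exact Submodule.mem_sup.mp hmem
  choose zm hzm zp hzp hzsum using fun t => hsum' t (z t)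
  have huniq : ∀ t : ℤ, ∀ a b : V, a ∈ Em (θ t p) → b ∈ Ep (θ t p) → a + b = z t →
      a = zm t ∧ b = zp t := by
    intro t a b ha hb hab
    have hdisj := (hsplit (θ t p) (hθO t p hp)).disjoint
    have h := hab.trans (hzsum t).symm
    have h1 : a - zm t = zp t - b := by
      rw [sub_eq_sub_iff_add_eq_add]
      rw [h]; abel
    have hmem1 : a - zm t ∈ Em (θ t p) := Submodule.sub_mem _ ha (hzm t)
    have hmem2 : a - zm t ∈ Ep (θ t p) := by
      rw [h1]; exact Submodule.sub_mem _ (hzp t) hb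
    have hz : a - zm t = 0 := by
      have := Submodule.disjoint_def.mp hdisj _ hmem1 hmem2
      exact this
    constructor
    · exact sub_eq_zero.mp hz
    · have ha' : a = zm t := sub_eq_zero.mp hz
      rw [ha'] at h
      exact add_left_cancel h
  have hproj' : ∀ t : ℤ, ‖zp t‖ ≤ M * ‖z t‖ ∧ ‖zm t‖ ≤ M * ‖z t‖ := by
    intro t
    have h := hproj (θ t p) (hθO t p hp) (zm t) (hzm t) (zp t) (hzp t)
    rwa [hzsum t] at h
  -- the two recursive inequalities
  have hrec : ∀ t : ℤ,
      ‖zm (t + (N:ℤ))‖ ≤ η * ‖zm t‖ + M * ε0 * (‖zm t‖ + ‖zp t‖) ∧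
      ‖zp t‖ ≤ η * (‖zp (t + (N:ℤ))‖ + M * ε0 * (‖zm t‖ + ‖zp t‖)) := by
    intro t
    set B := D (N:ℤ) (θ t p) with hB
    obtain ⟨Rm, hRm, Rp, hRp, hRsum⟩ := hsum' (t + (N:ℤ)) (z (t + (N:ℤ)) - B (z t))
    have hzt : ‖z (t + (N:ℤ)) - B (z t)‖ ≤ ε0 * ‖z t‖ := hT t
    have hz_ab : ‖z t‖ ≤ ‖zm t‖ + ‖zp t‖ := by
      rw [← hzsum t]; exact norm_add_le _ _
    have hRbound : ‖z (t + (N:ℤ)) - B (z t)‖ ≤ ε0 * (‖zm t‖ + ‖zp t‖) :=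
      hzt.trans (mul_le_mul_of_nonneg_left hz_ab hε0.le)
    have hRmb : ‖Rm‖ ≤ M * ε0 * (‖zm t‖ + ‖zp t‖) := by
      have h := (hproj (θ (t + (N:ℤ)) p) (hθO (t + (N:ℤ)) p hp) Rm hRm Rp hRp).2
      rw [hRsum] at h
      calc ‖Rm‖ ≤ M * ‖z (t + (N:ℤ)) - B (z t)‖ := h
        _ ≤ M * (ε0 * (‖zm t‖ + ‖zp t‖)) := mul_le_mul_of_nonneg_left hRbound hM0.le
        _ = M * ε0 * (‖zm t‖ + ‖zp t‖) := (mul_assoc _ _ _).symm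
    have hRpb : ‖Rp‖ ≤ M * ε0 * (‖zm t‖ + ‖zp t‖) := by
      have h := (hproj (θ (t + (N:ℤ)) p) (hθO (t + (N:ℤ)) p hp) Rm hRm Rp hRp).1
      rw [hRsum] at h
      calc ‖Rp‖ ≤ M * ‖z (t + (N:ℤ)) - B (z t)‖ := h
        _ ≤ M * (ε0 * (‖zm t‖ + ‖zp t‖)) := mul_le_mul_of_nonneg_left hRbound hM0.le
        _ = M * ε0 * (‖zm t‖ + ‖zp t‖) := (mul_assoc _ _ _).symm
    -- invariance of the splitting
    have hinvm : (Em (θ t p)).map B.toLinearMap = Em (θ (N:ℤ) (θ t p)) :=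
      (hinv (θ t p) (hθO t p hp) N).1
    have hinvp : (Ep (θ t p)).map B.toLinearMap = Ep (θ (N:ℤ) (θ t p)) :=
      (hinv (θ t p) (hθO t p hp) N).2
    have hBm : B (zm t) ∈ Em (θ (t + (N:ℤ)) p) := by
      have hmem : B (zm t) ∈ (Em (θ t p)).map B.toLinearMap :=
        Submodule.mem_map_of_mem (hzm t)
      rw [hinvm, hθθ t (N:ℤ) p] at hmem
      exact hmem
    have hBp : B (zp t) ∈ Ep (θ (t + (N:ℤ)) p) := by
      have hmem : B (zp t) ∈ (Ep (θ t p)).map B.toLinearMap :=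
        Submodule.mem_map_of_mem (hzp t)
      rw [hinvp, hθθ t (N:ℤ) p] at hmem
      exact hmem
    have hsum2 : (B (zm t) + Rm) + (B (zp t) + Rp) = z (t + (N:ℤ)) := by
      have hBz : B (zm t) + B (zp t) = B (z t) := by rw [← map_add, hzsum t]
      have e : (B (zm t) + Rm) + (B (zp t) + Rp) =
          (B (zm t) + B (zp t)) + (Rm + Rp) := by abel
      rw [e, hBz, hRsum]
      abel
    obtain ⟨hA1, hA2⟩ := huniq (t + (N:ℤ)) _ _ (Submodule.add_mem _ hBm hRm)
      (Submodule.add_mem _ hBp hRp) hsum2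
    have hBzm : ‖B (zm t)‖ ≤ η * ‖zm t‖ :=
      (hcontr (θ t p) (hθO t p hp) N).1 (zm t) (hzm t)
    constructor
    · calc ‖zm (t + (N:ℤ))‖ = ‖B (zm t) + Rm‖ := by rw [← hA1]
        _ ≤ ‖B (zm t)‖ + ‖Rm‖ := norm_add_le _ _
        _ ≤ η * ‖zm t‖ + M * ε0 * (‖zm t‖ + ‖zp t‖) := add_le_add hBzm hRmb
    · have h3 : ‖zp t‖ ≤ η * ‖B (zp t)‖ := hexp (θ t p) (hθO t p hp) (zp t) (hzp t)
      have he : B (zp t) = zp (t + (N:ℤ)) - Rp := by rw [← hA2]; abel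
      have h4 : ‖B (zp t)‖ ≤ ‖zp (t + (N:ℤ))‖ + ‖Rp‖ := by
        rw [he]; exact norm_sub_le _ _
      calc ‖zp t‖ ≤ η * ‖B (zp t)‖ := h3
        _ ≤ η * (‖zp (t + (N:ℤ))‖ + M * ε0 * (‖zm t‖ + ‖zp t‖)) :=
            mul_le_mul_of_nonneg_left
              (h4.trans (add_le_add_right hRpb _)) hη0.le
  -- supremum argument
  set a : ℤ → ℝ := fun t => ‖zm t‖ with hadef
  set b : ℤ → ℝ := fun t => ‖zp t‖ with hbdef
  have hub : ∀ t, a t ≤ M * δ ∧ b t ≤ M * δ := by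
    intro t
    constructor
    · exact (hproj' t).2.trans (mul_le_mul_of_nonneg_left (hznorm t) hM0.le)
    · exact (hproj' t).1.trans (mul_le_mul_of_nonneg_left (hznorm t) hM0.le)
  have hbddA : BddAbove (range a) := ⟨M * δ, by rintro _ ⟨t, rfl⟩; exact (hub t).1⟩
  have hbddB : BddAbove (range b) := ⟨M * δ, by rintro _ ⟨t, rfl⟩; exact (hub t).2⟩
  set α := sSup (range a) with hαdef
  set β := sSup (range b) with hβdef
  have hαle : ∀ t, a t ≤ α := fun t => le_csSup hbddA (mem_range_self t)
  have hβle : ∀ t, b t ≤ β := fun t => le_csSup hbddB (mem_range_self t)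
  have hα0 : 0 ≤ α := (norm_nonneg (zm 0)).trans (hαle 0)
  have hβ0 : 0 ≤ β := (norm_nonneg (zp 0)).trans (hβle 0)
  have h8 : (0:ℝ) ≤ M * ε0 := by rw [hMε]; norm_num
  have h1 : α ≤ η * α + (M * ε0) * (α + β) := by
    apply csSup_le (range_nonempty a)
    rintro _ ⟨s, rfl⟩
    have hs : a s ≤ η * a (s - N) + M * ε0 * (a (s - N) + b (s - N)) := by
      have h := (hrec (s - (N:ℤ))).1
      rw [sub_add_cancel] at h
      exact h
    refine hs.trans ?_
    exact add_le_add (mul_le_mul_of_nonneg_left (hαle _) hη0.le)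
      (mul_le_mul_of_nonneg_left (add_le_add (hαle _) (hβle _)) h8)
  have h2 : β ≤ η * (β + (M * ε0) * (α + β)) := by
    apply csSup_le (range_nonempty b)
    rintro _ ⟨s, rfl⟩
    refine ((hrec s).2).trans ?_
    exact mul_le_mul_of_nonneg_left
      (add_le_add (hβle _)
        (mul_le_mul_of_nonneg_left (add_le_add (hαle _) (hβle _)) h8)) hη0.le
  obtain ⟨hA0, hB0⟩ := stmt18_arith hη0.le hη8 h8 (le_of_eq hMε) hα0 hβ0 h1 h2
  have hzm0 : zm 0 = 0 := by
    have h : a 0 ≤ 0 := by rw [← hA0]; exact hαle 0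
    have := le_antisymm h (norm_nonneg (zm 0))
    exact norm_eq_zero.mp this
  have hzp0 : zp 0 = 0 := by
    have h : b 0 ≤ 0 := by rw [← hB0]; exact hβle 0
    have := le_antisymm h (norm_nonneg (zp 0))
    exact norm_eq_zero.mp this
  have hz0 : z 0 = 0 := by rw [← hzsum 0, hzm0, hzp0, add_zero]
  have hfin : y - p.2 = 0 := by
    have h : φ (0:ℤ) y p.1 - φ (0:ℤ) p.2 p.1 = 0 := hz0
    rwa [h0, h0] at h
  exact (sub_eq_zero.mp hfin).symm
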